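/- For every integer k ≥ 1 and all real numbers a > 0 and b > 0, one has a·b·(log₊(a·b))^k ≤ 2^{k−1}·((k/e)^k + 1)·b² + 2^{3(k−1)}·a²·(log₊ a)^{2k}. -/

import Mathlib

lemma log_le_div_e' {t : ℝ} (ht : 0 < t) : Real.log t ≤ t / Real.exp 1 := by
  have h := Real.log_le_sub_one_of_pos (show 0 < t / Real.exp 1 by positivity)
  rw [Real.log_div (ne_of_gt ht) (by positivity), Real.log_exp] at h
  linarith

lemma logpos_pow_le' {k : ℕ} (hk : 1 ≤ k) {t : ℝ} (ht : 0 < t) :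
    (max (Real.log t) 0) ^ k ≤ ((k : ℝ) / Real.exp 1) ^ k * t := by
  have hk0 : (k : ℝ) ≠ 0 := by positivity
  set s : ℝ := t ^ ((k : ℝ)⁻¹) with hs
  have hs0 : 0 < s := Real.rpow_pos_of_pos ht _
  have h1 : Real.log t = (k : ℝ) * Real.log s := by
    rw [hs, Real.log_rpow ht]
    field_simp
  have h2 : max (Real.log t) 0 ≤ (k : ℝ) / Real.exp 1 * s := by
    apply max_le
    · have := log_le_div_e' hs0
      rw [h1]
      calc (k:ℝ) * Real.log s ≤ (k:ℝ) * (s / Real.exp 1) := by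
            apply mul_le_mul_of_nonneg_left this (by positivity)
        _ = (k : ℝ) / Real.exp 1 * s := by ring
    · positivity
  have hsk : s ^ k = t := by
    rw [hs, ← Real.rpow_natCast (t ^ ((k:ℝ)⁻¹)) k, ← Real.rpow_mul ht.le]
    rw [inv_mul_cancel₀ hk0, Real.rpow_one]
  calc (max (Real.log t) 0) ^ k ≤ ((k : ℝ) / Real.exp 1 * s) ^ k :=
        pow_le_pow_left₀ (le_max_right _ _) h2 k
    _ = ((k : ℝ) / Real.exp 1) ^ k * s ^ k := mul_pow _ _ _
    _ = ((k : ℝ) / Real.exp 1) ^ k * t := by rw [hsk]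

/-- The numerical inequality
`a b log₊ᵏ(a b) ≤ 2^{k-1}((k/e)^k + 1) b² + 2^{3(k-1)} a² log₊^{2k} a`. -/
theorem stmt_7 (k : ℕ) (hk : 1 ≤ k) (a b : ℝ) (ha : 0 < a) (hb : 0 < b) :
    a * b * (max (Real.log (a * b)) 0) ^ k ≤
      (2:ℝ) ^ (k - 1) * (((k : ℝ) / Real.exp 1) ^ k + 1) * b ^ 2 +
        (2:ℝ) ^ (3 * (k - 1)) * a ^ 2 * (max (Real.log a) 0) ^ (2 * k) := by
  obtain ⟨m, rfl⟩ : ∃ m, k = m + 1 := ⟨k - 1, (Nat.succ_pred_eq_of_pos hk).symm⟩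
  set k := m + 1 with hkdef
  have hkm : k - 1 = m := by omega
  have h3km : 3 * (k - 1) = 3 * m := by omega
  set L : ℝ := max (Real.log a) 0 with hL
  set N : ℝ := max (Real.log (b / a)) 0 with hN
  set X : ℝ := max (Real.log (a * b)) 0 with hX
  have hL0 : 0 ≤ L := le_max_right _ _
  have hN0 : 0 ≤ N := le_max_right _ _
  have hX0 : 0 ≤ X := le_max_right _ _
  -- Step 1: X ≤ 2L + N
  have h1 : X ≤ 2 * L + N := by
    apply max_le
    · have : Real.log (a * b) = 2 * Real.log a + Real.log (b / a) := by
        rw [Real.log_mul (ne_of_gt ha) (ne_of_gt hb),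
          Real.log_div (ne_of_gt hb) (ne_of_gt ha)]
        ring
      rw [this]
      have h2a : Real.log a ≤ L := le_max_left _ _
      have h2b : Real.log (b / a) ≤ N := le_max_left _ _
      linarith
    · positivity
  -- Step 2: power split
  have h2 : X ^ k ≤ 2 ^ m * ((2 * L) ^ k + N ^ k) := by
    calc X ^ k ≤ (2 * L + N) ^ k := pow_le_pow_left₀ hX0 h1 k
      _ ≤ 2 ^ (k - 1) * ((2 * L) ^ k + N ^ k) := add_pow_le (by linarith) hN0 k
      _ = 2 ^ m * ((2 * L) ^ k + N ^ k) := by rw [hkm]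
  -- Step 3: N^k ≤ (k/e)^k * (b/a)
  have h3 : N ^ k ≤ ((k : ℝ) / Real.exp 1) ^ k * (b / a) :=
    logpos_pow_le' hk (by positivity)
  -- Step 4: Young
  have h4 : 2 * b * (2 ^ m * (a * L ^ k)) ≤ b ^ 2 + (2 ^ m * (a * L ^ k)) ^ 2 :=
    two_mul_le_add_sq b (2 ^ m * (a * L ^ k))
  -- Combine
  rw [hkm]
  have hab : (0:ℝ) < a * b := by positivity
  have step1 : a * b * X ^ k ≤ 2 ^ m * (2 ^ k * (a * b * L ^ k)) + 2 ^ m * (a * b * N ^ k) := by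
    calc a * b * X ^ k ≤ a * b * (2 ^ m * ((2 * L) ^ k + N ^ k)) :=
          mul_le_mul_of_nonneg_left h2 hab.le
      _ = 2 ^ m * (2 ^ k * (a * b * L ^ k)) + 2 ^ m * (a * b * N ^ k) := by
          rw [mul_pow]; ring
  have stepB : a * b * N ^ k ≤ ((k : ℝ) / Real.exp 1) ^ k * b ^ 2 := by
    calc a * b * N ^ k ≤ a * b * (((k : ℝ) / Real.exp 1) ^ k * (b / a)) :=
          mul_le_mul_of_nonneg_left h3 hab.le
      _ = ((k : ℝ) / Real.exp 1) ^ k * b ^ 2 := by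
          field_simp
  have stepA : 2 ^ m * (2 ^ k * (a * b * L ^ k)) ≤
      2 ^ m * b ^ 2 + 2 ^ (3 * m) * a ^ 2 * L ^ (2 * k) := by
    have e1 : (2:ℝ) ^ m * (2 ^ k * (a * b * L ^ k)) =
        2 ^ m * (2 * b * (2 ^ m * (a * L ^ k))) := by
      rw [hkdef, pow_succ]; ring
    have e2 : (2:ℝ) ^ m * (b ^ 2 + (2 ^ m * (a * L ^ k)) ^ 2) =
        2 ^ m * b ^ 2 + 2 ^ (3 * m) * a ^ 2 * L ^ (2 * k) := by
      have : ((2:ℝ) ^ m * (a * L ^ k)) ^ 2 = 2 ^ (2 * m) * a ^ 2 * L ^ (2 * k) := by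
        rw [mul_pow, mul_pow, ← pow_mul, ← pow_mul]
        ring_nf
      rw [this]
      rw [show (3 : ℕ) * m = m + 2 * m by ring, pow_add]
      ring
    rw [e1, ← e2]
    exact mul_le_mul_of_nonneg_left h4 (by positivity)
  have hpos : (0:ℝ) ≤ 2 ^ m := by positivity
  calc a * b * X ^ k ≤ 2 ^ m * (2 ^ k * (a * b * L ^ k)) + 2 ^ m * (a * b * N ^ k) := step1
    _ ≤ (2 ^ m * b ^ 2 + 2 ^ (3 * m) * a ^ 2 * L ^ (2 * k)) +
        2 ^ m * (((k : ℝ) / Real.exp 1) ^ k * b ^ 2) := by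
        gcongr
    _ = (2:ℝ) ^ m * (((k : ℝ) / Real.exp 1) ^ k + 1) * b ^ 2 +
        2 ^ (3 * m) * a ^ 2 * L ^ (2 * k) := by ring
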